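/- Let A = B + C be m×n real matrices. Then for all j, σⱼ(A) ≤ σⱼ(B)·(1 + (1 + ‖C‖₂/σ_k(B))·(‖C‖₂/σⱼ(A))) for any k ≥ j with σ_k(B) > 0 and σⱼ(A) > 0. -/

import Mathlib

open Matrix
noncomputable def specNorm {m n : Type*} [Fintype m] [Fintype n] [DecidableEq n]
    (A : Matrix m n ℝ) : ℝ :=
  ‖LinearMap.toContinuousLinearMap (Matrix.toEuclideanLin A)‖

noncomputable def frobNorm {m n : Type*} [Fintype m] [Fintype n]
    (A : Matrix m n ℝ) : ℝ :=
  Real.sqrt (∑ i, ∑ j, (A i j) ^ 2)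

/-- The `j`-th largest singular value of `A` (1-indexed), characterized as the
distance in spectral norm from `A` to the set of matrices of rank `< j`. -/
noncomputable def sval {m n : Type*} [Fintype m] [Fintype n] [DecidableEq n]
    (A : Matrix m n ℝ) (j : ℕ) : ℝ :=
  sInf { c | ∃ B : Matrix m n ℝ, B.rank < j ∧ specNorm (A - B) = c }

lemma specNorm_nonneg {m n : Type*} [Fintype m] [Fintype n] [DecidableEq n]
    (A : Matrix m n ℝ) : 0 ≤ specNorm A := norm_nonneg _

lemma specNorm_add_le {m n : Type*} [Fintype m] [Fintype n] [DecidableEq n]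
    (A B : Matrix m n ℝ) : specNorm (A + B) ≤ specNorm A + specNorm B := by
  simp only [specNorm, map_add]
  exact norm_add_le _ _

lemma svalSet_bddBelow {m n : Type*} [Fintype m] [Fintype n] [DecidableEq n]
    (A : Matrix m n ℝ) (j : ℕ) :
    BddBelow { c | ∃ B : Matrix m n ℝ, B.rank < j ∧ specNorm (A - B) = c } := by
  exact ⟨0, fun c hc => by obtain ⟨R, _, rfl⟩ := hc; exact specNorm_nonneg _⟩

lemma svalSet_nonempty {m n : Type*} [Fintype m] [Fintype n] [DecidableEq n]
    (A : Matrix m n ℝ) (j : ℕ) (hj : 0 < j) :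
    Set.Nonempty { c | ∃ B : Matrix m n ℝ, B.rank < j ∧ specNorm (A - B) = c } :=
  ⟨specNorm (A - 0), 0, by simpa using hj, rfl⟩

/-- if A = B + C then
σⱼ(A) ≤ σⱼ(B)(1 + (1 + ‖C‖₂/σ_k(B))(‖C‖₂/σⱼ(A))) for k ≥ j with σ_k(B) > 0
and σⱼ(A) > 0. -/
theorem singular_value_bound_truncated_lu {m n : ℕ}
    (A B C : Matrix (Fin m) (Fin n) ℝ) (j k : ℕ)
    (hABC : A = B + C)
    (hjk : j ≤ k)
    (hB : 0 < sval B k)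
    (hA : 0 < sval A j) :
    sval A j ≤ sval B j *
      (1 + (1 + specNorm C / sval B k) * (specNorm C / sval A j)) := by
  rcases Nat.eq_zero_or_pos j with rfl | hj
  · exfalso
    have : sval A 0 = 0 := by
      simp [sval, Set.eq_empty_iff_forall_notMem.mpr, Real.sInf_empty,
        show { c | ∃ B : Matrix (Fin m) (Fin n) ℝ, B.rank < 0 ∧ specNorm (A - B) = c } = ∅ from
          Set.eq_empty_iff_forall_notMem.mpr (by rintro c ⟨R, hR, -⟩; omega)]
    linarith
  have hk : 0 < k := lt_of_lt_of_le hj hjk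
  -- monotonicity: sval B k ≤ sval B j
  have hmono : sval B k ≤ sval B j := by
    apply csInf_le_csInf (svalSet_bddBelow B k) (svalSet_nonempty B j hj)
    rintro c ⟨R, hR, rfl⟩
    exact ⟨R, lt_of_lt_of_le hR (by exact_mod_cast hjk), rfl⟩
  -- Weyl: sval A j ≤ sval B j + specNorm C
  have hweyl : sval A j ≤ sval B j + specNorm C := by
    rw [← sub_le_iff_le_add]
    apply le_csInf (svalSet_nonempty B j hj)
    rintro c ⟨R, hR, rfl⟩
    have h1 : sval A j ≤ specNorm (A - R) :=
      csInf_le (svalSet_bddBelow A j) ⟨R, hR, rfl⟩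
    have h2 : specNorm (A - R) ≤ specNorm (B - R) + specNorm C := by
      have : A - R = (B - R) + C := by rw [hABC]; abel
      rw [this]; exact specNorm_add_le _ _
    linarith
  have hC : 0 ≤ specNorm C := specNorm_nonneg C
  have hBj : 0 < sval B j := lt_of_lt_of_le hB hmono
  rw [← mul_le_mul_iff_right₀ hA]
  have key : sval A j * sval A j ≤ sval A j * sval B j + (sval B j + specNorm C) * specNorm C := by
    nlinarith
  calc sval A j * sval A j ≤ sval A j * sval B j + (sval B j + specNorm C) * specNorm C := key
    _ ≤ sval A j * (sval B j * (1 + (1 + specNorm C / sval B k) * (specNorm C / sval A j))) := by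
        have hexp : sval A j * (sval B j * (1 + (1 + specNorm C / sval B k) * (specNorm C / sval A j)))
            = sval A j * sval B j + sval B j * specNorm C + sval B j * specNorm C * specNorm C / sval B k := by
          field_simp
          ring
        have hdiv : specNorm C * specNorm C ≤ sval B j * specNorm C * specNorm C / sval B k := by
          rw [le_div_iff₀ hB]
          nlinarith
        linarith
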